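/- For matrices Γ, α ∈ ℝ^{3×3} the following are equivalent (Nye's formulas): α = −Γᵀ + tr(Γ)·𝟙₃ if and only if Γ = −αᵀ + (1/2)·tr(α)·𝟙₃. -/
import Mathlib


open Matrix

noncomputable section

theorem stmt_2 (Γ α : Matrix (Fin 3) (Fin 3) ℝ) :
    α = -Γᵀ + (Matrix.trace Γ) • (1 : Matrix (Fin 3) (Fin 3) ℝ) ↔
    Γ = -αᵀ + ((1 / 2 : ℝ) * Matrix.trace α) • (1 : Matrix (Fin 3) (Fin 3) ℝ) := by
  constructor <;> rintro rfl <;>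
    · simp only [trace_add, trace_neg, trace_transpose, trace_smul, trace_one,
        transpose_add, transpose_neg, transpose_transpose, transpose_smul, transpose_one,
        smul_eq_mul, Fintype.card_fin]
      ext i j
      simp [Matrix.add_apply, Matrix.smul_apply, Matrix.one_apply]
      split <;> ring
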